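/- Let ρ, b, σ, c* be positive real numbers. Let w : [0,∞) → ℝ be twice continuously differentiable with w(x) > 0 and w'(x) ≥ 0 for all x ≥ 0, satisfying ρ·w(x) + (b x − (1+c*))·w'(x) − (1/2)σ² x²·w''(x) = 0 for all x ≥ 0. Let ψ : [0,∞) → ℝ be continuous and a viscosity subsolution on [0,∞) of the linearized equation ρψ + b x Dψ − (1+c*)|Dψ| − (1/2)σ² x² D²ψ = 0, and suppose that for every ε > 0 the function ψ − ε·w attains its supremum over [0,∞) at some point. Then ψ(x) ≤ 0 for all x ∈ [0,∞). -/

import Mathlib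

open Real Set

/-- `ψ` is a viscosity subsolution on `[0,∞)` of the linearized equation
`ρψ + bx Dψ − (1+c*)|Dψ| − (1/2)σ²x² D²ψ = 0`. -/
def IsLinearizedSubsolution (ρ b σ cstar : ℝ) (ψ : ℝ → ℝ) : Prop :=
  ∀ φ : ℝ → ℝ, ContDiff ℝ 2 φ →
    ∀ x₀ ∈ Ici (0:ℝ), IsLocalMaxOn (fun x => ψ x - φ x) (Ici 0) x₀ →
      ρ * ψ x₀ + b * x₀ * deriv φ x₀ - (1 + cstar) * |deriv φ x₀|
        - (1 / 2) * σ ^ 2 * x₀ ^ 2 * deriv (deriv φ) x₀ ≤ 0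

/-- The final step of the comparison proof: a subsolution of the linearized equation that can
be touched from above by `ε w` for every `ε > 0` is nonpositive. -/
theorem linearized_subsolution_nonpos
    (ρ b σ cstar : ℝ) (hρ : 0 < ρ) (hb : 0 < b) (hσ : 0 < σ) (hcstar : 0 < cstar)
    (w : ℝ → ℝ) (hw : ContDiff ℝ 2 w)
    (hw_pos : ∀ x ∈ Ici (0:ℝ), 0 < w x)
    (hw_incr : ∀ x ∈ Ici (0:ℝ), 0 ≤ deriv w x)
    (hw_ode : ∀ x ∈ Ici (0:ℝ),
      ρ * w x + (b * x - (1 + cstar)) * deriv w x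
        - (1 / 2) * σ ^ 2 * x ^ 2 * deriv (deriv w) x = 0)
    (ψ : ℝ → ℝ) (hψ_cont : ContinuousOn ψ (Ici 0))
    (hψ_sub : IsLinearizedSubsolution ρ b σ cstar ψ)
    (hmax : ∀ ε > (0:ℝ), ∃ x₀ ∈ Ici (0:ℝ),
      IsMaxOn (fun x => ψ x - ε * w x) (Ici 0) x₀) :
    ∀ x ∈ Ici (0:ℝ), ψ x ≤ 0 := by
  -- Main claim: ψ x ≤ ε * w x for all ε > 0 and x ≥ 0.
  have key : ∀ ε > (0:ℝ), ∀ x ∈ Ici (0:ℝ), ψ x ≤ ε * w x := by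
    intro ε hε x hx
    obtain ⟨x₀, hx₀, hmax₀⟩ := hmax ε hε
    have hwdiff : Differentiable ℝ w := hw.differentiable (by norm_num)
    have hdφ : deriv (fun y => ε * w y) = fun y => ε * deriv w y := by
      funext y
      exact deriv_const_mul ε (hwdiff y)
    have hφ : ContDiff ℝ 2 (fun y => ε * w y) := hw.const_smul ε
    have hddφ : deriv (deriv (fun y => ε * w y)) x₀ = ε * deriv (deriv w) x₀ := by
      rw [hdφ]
      exact deriv_const_mul ε ((hw.iterate_deriv' 1 1).differentiable (by norm_num) x₀)
    have hsub := hψ_sub (fun y => ε * w y) hφ x₀ hx₀ (hmax₀.filter_mono inf_le_right)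
    rw [hddφ] at hsub
    simp only [hdφ] at hsub
    have habs : |ε * deriv w x₀| = ε * deriv w x₀ :=
      abs_of_nonneg (mul_nonneg hε.le (hw_incr x₀ hx₀))
    rw [habs] at hsub
    have hode := hw_ode x₀ hx₀
    -- from hsub and hode: ρ ψ x₀ ≤ ε ρ w x₀
    have h1 : ρ * ψ x₀ ≤ ε * (ρ * w x₀) := by nlinarith [hsub, hode]
    have h2 : ψ x₀ ≤ ε * w x₀ := by
      have := (mul_le_mul_iff_right₀ hρ).mp (by linarith : ρ * ψ x₀ ≤ ρ * (ε * w x₀))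
      exact this
    have h3 : ψ x - ε * w x ≤ ψ x₀ - ε * w x₀ := hmax₀ hx
    linarith
  intro x hx
  by_contra h
  push_neg at h
  have hwx := hw_pos x hx
  have hε : 0 < ψ x / (2 * w x) := by positivity
  have := key _ hε x hx
  rw [div_mul_eq_mul_div] at this
  have : ψ x ≤ ψ x / 2 := by
    calc ψ x ≤ ψ x * w x / (2 * w x) := this
    _ = ψ x / 2 := by field_simp
  linarith
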